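/- Hexahedron gauge identity: for the four light-cone maps ⟨ξ⟩, ⟨ξ₀⟩, ⟨ξ₁⟩, ⟨ξ₀₁⟩ of a Bianchi quadrilateral one has, for all t, Γ_{⟨ξ₀⟩}^{⟨ξ₀₁⟩}(1 − t/μ₁) ∘ Γ_{⟨ξ⟩}^{⟨ξ₀⟩}(1 − t/μ₀) = Γ_{⟨ξ₁⟩}^{⟨ξ₀₁⟩}(1 − t/μ₀) ∘ Γ_{⟨ξ⟩}^{⟨ξ₁⟩}(1 − t/μ₁). -/

import Mathlib

noncomputable section

variable {V : Type*} [NormedAddCommGroup V] [NormedSpace ℝ V]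

/-- The skew endomorphism a∧b : y ↦ (y,a)b − (y,b)a of a space with bilinear form B. -/
def wedgeMap (B : LinearMap.BilinForm ℝ V) (a b : V) : V →ₗ[ℝ] V where
  toFun y := B y a • b - B y b • a
  map_add' y z := by simp [add_smul]; abel
  map_smul' c y := by simp [mul_smul]; module

/-- The transformation Γ_{⟨ξ⟩}^{⟨ξ̂⟩}(r): multiplication by 1/r on ⟨ξ⟩, by 1 on
⟨ξ,ξ̂⟩^⊥ and by r on ⟨ξ̂⟩, for lightlike ξ, ξ̂ with B ξ ξ̂ ≠ 0. -/
def Gamma (B : LinearMap.BilinForm ℝ V) (ξ ξh : V) (r : ℝ) : V →ₗ[ℝ] V where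
  toFun y := y + (((1/r - 1) * B y ξh) / B ξ ξh) • ξ + (((r - 1) * B y ξ) / B ξ ξh) • ξh
  map_add' y z := by simp [mul_add, add_div, add_smul]; abel
  map_smul' c y := by simp [mul_div_assoc, mul_assoc, mul_smul]; module

set_option maxHeartbeats 4000000

lemma Gamma_apply (B : LinearMap.BilinForm ℝ V) (ξ ξh : V) (r : ℝ) (y : V) :
    Gamma B ξ ξh r y = y + (((1/r - 1) * B y ξh) / B ξ ξh) • ξ
      + (((r - 1) * B y ξ) / B ξ ξh) • ξh := rfl

/-- the hexahedron gauge identity for a Bianchi quadrilateral. -/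
theorem hexahedron_gauge
    (B : LinearMap.BilinForm ℝ V) (hB : B.IsSymm)
    (ξ ξ₀ ξ₁ ξ₀₁ : V) (μ₀ μ₁ : ℝ) (hμ₀ : μ₀ ≠ 0) (hμ₁ : μ₁ ≠ 0) (hμ : μ₀ ≠ μ₁)
    (hl : B ξ ξ = 0) (hl₀ : B ξ₀ ξ₀ = 0) (hl₁ : B ξ₁ ξ₁ = 0) (hl₀₁ : B ξ₀₁ ξ₀₁ = 0)
    (hp₀ : B ξ ξ₀ ≠ 0) (hp₁ : B ξ ξ₁ ≠ 0) (hp₀₁ : B ξ₀ ξ₀₁ ≠ 0) (hp₁₀ : B ξ₁ ξ₀₁ ≠ 0)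
    -- the four points lie on a common circle :
    (hspan : ξ₀₁ ∈ Submodule.span ℝ ({ξ, ξ₀, ξ₁} : Set V))
    -- pairwise distinct lines :
    (hd₁ : ∀ c : ℝ, ξ₀ ≠ c • ξ) (hd₂ : ∀ c : ℝ, ξ₁ ≠ c • ξ)
    (hd₃ : ∀ c : ℝ, ξ₁ ≠ c • ξ₀) (hd₄ : ∀ c : ℝ, ξ₀₁ ≠ c • ξ)
    (hd₅ : ∀ c : ℝ, ξ₀₁ ≠ c • ξ₀) (hd₆ : ∀ c : ℝ, ξ₀₁ ≠ c • ξ₁)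
    -- cross ratio cr(⟨ξ⟩,⟨ξ₀⟩,⟨ξ₀₁⟩,⟨ξ₁⟩) = μ₁/μ₀ :
    (hcr : ∃ c : ℝ, c ≠ 0 ∧ ξ₀₁ = c • Gamma B ξ ξ₀ (1 - μ₁/μ₀) ξ₁) :
    ∀ t : ℝ, t ≠ μ₀ → t ≠ μ₁ →
      (Gamma B ξ₀ ξ₀₁ (1 - t/μ₁)) ∘ₗ (Gamma B ξ ξ₀ (1 - t/μ₀))
        = (Gamma B ξ₁ ξ₀₁ (1 - t/μ₀)) ∘ₗ (Gamma B ξ ξ₁ (1 - t/μ₁)) := by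
  have hbs : ∀ x y : V, B x y = B y x := fun x y => LinearMap.BilinForm.isSymm_def.mp hB x y
  have hμd : μ₀ - μ₁ ≠ 0 := sub_ne_zero.mpr hμ
  obtain ⟨c, hc, he⟩ := hcr
  have he' : ξ₀₁ = ((c * μ₁ * B ξ₀ ξ₁) / ((μ₀ - μ₁) * B ξ ξ₀)) • ξ
      + ((-(c * μ₁) * B ξ ξ₁) / (μ₀ * B ξ ξ₀)) • ξ₀ + c • ξ₁ := by
    rw [he, Gamma_apply, hbs ξ₁ ξ, hbs ξ₁ ξ₀]
    match_scalars <;> field_simp <;> ring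
  clear he hl₀₁
  subst he'
  have hs : B ξ₀ ξ₁ ≠ 0 := by
    intro h
    apply hp₀₁
    simp [map_add, map_smul, hl₀, hbs ξ₀ ξ, h]
  intro t ht₀ ht₁
  have hr₀ : (1:ℝ) - t/μ₀ ≠ 0 := by
    rw [sub_ne_zero]; intro h; exact ht₀ (by field_simp at h; linarith)
  have hr₁ : (1:ℝ) - t/μ₁ ≠ 0 := by
    rw [sub_ne_zero]; intro h; exact ht₁ (by field_simp at h; linarith)
  have hq₀ : B ξ₀ (((c * μ₁ * B ξ₀ ξ₁) / ((μ₀ - μ₁) * B ξ ξ₀)) • ξ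
      + ((-(c * μ₁) * B ξ ξ₁) / (μ₀ * B ξ ξ₀)) • ξ₀ + c • ξ₁) = c * μ₀ * B ξ₀ ξ₁ / (μ₀ - μ₁) := by
    simp [map_add, map_smul, hl₀, hbs ξ₀ ξ]
    field_simp
    ring
  have hq₁ : B ξ₁ (((c * μ₁ * B ξ₀ ξ₁) / ((μ₀ - μ₁) * B ξ ξ₀)) • ξ
      + ((-(c * μ₁) * B ξ ξ₁) / (μ₀ * B ξ ξ₀)) • ξ₀ + c • ξ₁)
      = c * μ₁ * μ₁ * B ξ ξ₁ * B ξ₀ ξ₁ / ((μ₀ - μ₁) * μ₀ * B ξ ξ₀) := by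
    simp [map_add, map_smul, hl₁, hbs ξ₁ ξ, hbs ξ₁ ξ₀]
    field_simp
    ring
  have hd0 : μ₀ - t ≠ 0 := sub_ne_zero.mpr (Ne.symm ht₀)
  have hd1 : μ₁ - t ≠ 0 := sub_ne_zero.mpr (Ne.symm ht₁)
  have e0 : 1 - t/μ₀ = (μ₀ - t)/μ₀ := by field_simp
  have e1 : 1 - t/μ₁ = (μ₁ - t)/μ₁ := by field_simp
  ext y
  simp only [LinearMap.comp_apply, Gamma_apply, map_add, map_smul, smul_eq_mul,
    hl, hl₀, hl₁, hbs ξ₀ ξ, hbs ξ₁ ξ, hbs ξ₁ ξ₀, hq₀, hq₁, LinearMap.add_apply,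
    LinearMap.smul_apply, smul_add, smul_smul, e0, e1]
  match_scalars <;> field_simp [hd0, hd1, hμd, hc, hs, hp₀, hp₁] <;> ring
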